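/- Let T be an n×n upper-triangular complex Toeplitz matrix with real diagonal λ and nonzero superdiagonal entry t₂, and B = T ⊕ conj(T). Then there exists an invertible 2n×2n matrix S such that S⁻¹BS = J_n(λ) ⊕ J_n(λ) and S* Q_{2n} S = Q_n ⊕ (−Q_n). -/

import Mathlib

open Matrix

def jordanBlock (n : ℕ) (lam : ℂ) : Matrix (Fin n) (Fin n) ℂ :=
  fun i j => if (i : ℕ) = (j : ℕ) then lam else if (i : ℕ) + 1 = (j : ℕ) then 1 else 0

def backQ (n : ℕ) : Matrix (Fin n) (Fin n) ℂ :=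
  fun i j => if (i : ℕ) + (j : ℕ) + 1 = n then 1 else 0

def dsum {n : ℕ} (A B : Matrix (Fin n) (Fin n) ℂ) :
    Matrix (Fin (n + n)) (Fin (n + n)) ℂ :=
  Matrix.reindex finSumFinEquiv finSumFinEquiv (Matrix.fromBlocks A 0 0 B)

namespace ToeplitzAux

open Matrix

variable {n : ℕ}

lemma jb0_apply (i j : Fin n) :
    jordanBlock n 0 i j = if (i : ℕ) + 1 = (j : ℕ) then 1 else 0 := by
  unfold jordanBlock
  rcases eq_or_ne (i : ℕ) (j : ℕ) with h | h
  · rw [if_pos h, if_neg (by omega)]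
  · rw [if_neg h]

lemma backQ_apply (i j : Fin n) :
    backQ n i j = if (i : ℕ) + (j : ℕ) + 1 = n then 1 else 0 := rfl

lemma backQ_mul_apply (A : Matrix (Fin n) (Fin n) ℂ) (i j : Fin n) :
    (backQ n * A) i j = A i.rev j := by
  rw [Matrix.mul_apply, Finset.sum_eq_single i.rev]
  · rw [backQ_apply, if_pos (by rw [Fin.val_rev]; omega), one_mul]
  · intro k _ hk
    rw [backQ_apply, if_neg, zero_mul]
    intro hcon
    exact hk (Fin.ext (by rw [Fin.val_rev]; omega))
  · intro h; exact absurd (Finset.mem_univ _) h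

lemma mul_backQ_apply (A : Matrix (Fin n) (Fin n) ℂ) (i j : Fin n) :
    (A * backQ n) i j = A i j.rev := by
  rw [Matrix.mul_apply, Finset.sum_eq_single j.rev]
  · rw [backQ_apply, if_pos (by rw [Fin.val_rev]; omega), mul_one]
  · intro k _ hk
    rw [backQ_apply, if_neg, mul_zero]
    intro hcon
    exact hk (Fin.ext (by rw [Fin.val_rev]; omega))
  · intro h; exact absurd (Finset.mem_univ _) h

lemma backQ_mul_backQ : backQ n * backQ n = 1 := by
  ext i j
  rw [backQ_mul_apply, backQ_apply]
  rcases eq_or_ne i j with h | h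
  · subst h
    rw [if_pos (by rw [Fin.val_rev]; omega), Matrix.one_apply_eq]
  · rw [if_neg, Matrix.one_apply_ne h]
    have : (i : ℕ) ≠ (j : ℕ) := fun hc => h (Fin.ext hc)
    rw [Fin.val_rev]
    have := i.isLt
    omega

lemma shift_mul_row (A : Matrix (Fin n) (Fin n) ℂ) (k : ℕ) (hk : k + 1 < n) (j : Fin n) :
    (jordanBlock n 0 * A) ⟨k, by omega⟩ j = A ⟨k + 1, hk⟩ j := by
  rw [Matrix.mul_apply, Finset.sum_eq_single (⟨k + 1, hk⟩ : Fin n)]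
  · rw [jb0_apply, if_pos rfl, one_mul]
  · intro b _ hb
    rw [jb0_apply, if_neg, zero_mul]
    exact fun hc => hb (Fin.ext (by simp only [Fin.val_mk] at hc ⊢; omega))
  · intro h; exact absurd (Finset.mem_univ _) h

lemma mul_shift_col (A : Matrix (Fin n) (Fin n) ℂ) (i : Fin n) (k : ℕ) (hk : k + 1 < n) :
    (A * jordanBlock n 0) i ⟨k + 1, hk⟩ = A i ⟨k, by omega⟩ := by
  rw [Matrix.mul_apply, Finset.sum_eq_single (⟨k, by omega⟩ : Fin n)]
  · rw [jb0_apply, if_pos rfl, mul_one]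
  · intro b _ hb
    rw [jb0_apply, if_neg, mul_zero]
    exact fun hc => hb (Fin.ext (by simp only [Fin.val_mk] at hc ⊢; omega))
  · intro h; exact absurd (Finset.mem_univ _) h

lemma mul_shift_col_zero (A : Matrix (Fin n) (Fin n) ℂ) (i : Fin n) (h0 : 0 < n) :
    (A * jordanBlock n 0) i ⟨0, h0⟩ = 0 := by
  rw [Matrix.mul_apply]
  apply Finset.sum_eq_zero
  intro b _
  rw [jb0_apply, if_neg (by simp only [Fin.val_mk]; omega), mul_zero]

lemma centralizer_struct (hn : 0 < n) {A : Matrix (Fin n) (Fin n) ℂ}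
    (h : A * jordanBlock n 0 = jordanBlock n 0 * A) :
    ∀ (k : ℕ) (hk : k < n) (j : Fin n),
      A ⟨k, hk⟩ j = if k ≤ (j : ℕ) then
        A ⟨0, hn⟩ ⟨(j : ℕ) - k, Nat.lt_of_le_of_lt (Nat.sub_le _ _) j.isLt⟩ else 0 := by
  intro k
  induction k with
  | zero =>
    intro hk j
    rw [if_pos (Nat.zero_le _)]
    rfl
  | succ k ih =>
    intro hk j
    have hk1 : k + 1 < n := hk
    rcases j with ⟨jv, hj⟩
    have hrel := congrFun (congrFun h ⟨k, by omega⟩) ⟨jv, hj⟩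
    rw [shift_mul_row A k hk1] at hrel
    cases jv with
    | zero =>
      rw [mul_shift_col_zero A _ hn] at hrel
      rw [← hrel, if_neg (by simp only [Fin.val_mk]; omega)]
    | succ jv' =>
      rw [mul_shift_col A _ jv' hj] at hrel
      rw [← hrel, ih (by omega) ⟨jv', by omega⟩]
      simp only [Fin.val_mk]
      rcases le_or_gt (k + 1) (jv' + 1) with hle | hlt
      · rw [if_pos (by omega), if_pos (by omega)]
        congr 1
        rw [Fin.mk_eq_mk]
        omega
      · rw [if_neg (by omega), if_neg (by omega)]

lemma centralizer_struct' (hn : 0 < n) {A : Matrix (Fin n) (Fin n) ℂ}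
    (h : A * jordanBlock n 0 = jordanBlock n 0 * A) (i j : Fin n) :
    A i j = if (i : ℕ) ≤ (j : ℕ) then
      A ⟨0, hn⟩ ⟨(j : ℕ) - (i : ℕ), Nat.lt_of_le_of_lt (Nat.sub_le _ _) j.isLt⟩ else 0 :=
  centralizer_struct hn h i.val i.isLt j

lemma centralizer_flip (hn : 0 < n) {A : Matrix (Fin n) (Fin n) ℂ}
    (h : A * jordanBlock n 0 = jordanBlock n 0 * A) :
    backQ n * A * backQ n = Aᵀ := by
  ext i j
  rw [mul_backQ_apply, backQ_mul_apply, Matrix.transpose_apply]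
  rw [centralizer_struct' hn h i.rev j.rev, centralizer_struct' hn h j i]
  have hi := i.isLt
  have hj := j.isLt
  simp only [Fin.val_rev]
  rcases le_or_gt (j : ℕ) (i : ℕ) with hle | hlt
  · rw [if_pos (by omega), if_pos hle]
    congr 1
    rw [Fin.mk_eq_mk]
    omega
  · rw [if_neg (by omega), if_neg (by omega)]

lemma strictUpper_pow {A : Matrix (Fin n) (Fin n) ℂ}
    (hup : ∀ i j : Fin n, (j : ℕ) ≤ (i : ℕ) → A i j = 0) :
    ∀ (k : ℕ) (i j : Fin n), (j : ℕ) < (i : ℕ) + k → (A ^ k) i j = 0 := by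
  intro k
  induction k with
  | zero =>
    intro i j hij
    rw [pow_zero, Matrix.one_apply_ne]
    intro hc; rw [hc] at hij; omega
  | succ k ih =>
    intro i j hij
    rw [pow_succ', Matrix.mul_apply]
    apply Finset.sum_eq_zero
    intro b _
    rcases le_or_gt (b : ℕ) (i : ℕ) with hb | hb
    · rw [hup i b hb, zero_mul]
    · rw [ih b j (by omega), mul_zero]

lemma strictUpper_pow_diag {A : Matrix (Fin n) (Fin n) ℂ} {c : ℂ}
    (hup : ∀ i j : Fin n, (j : ℕ) ≤ (i : ℕ) → A i j = 0)
    (hsd : ∀ i j : Fin n, (i : ℕ) + 1 = (j : ℕ) → A i j = c) :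
    ∀ (k : ℕ) (i j : Fin n), (i : ℕ) + k = (j : ℕ) → (A ^ k) i j = c ^ k := by
  intro k
  induction k with
  | zero =>
    intro i j hij
    rw [pow_zero, show i = j from Fin.ext (by omega), Matrix.one_apply_eq, pow_zero]
  | succ k ih =>
    intro i j hij
    have hi1 : (i : ℕ) + 1 < n := by have := j.isLt; omega
    rw [pow_succ', Matrix.mul_apply, Finset.sum_eq_single (⟨(i : ℕ) + 1, hi1⟩ : Fin n)]
    · rw [hsd i ⟨(i : ℕ) + 1, hi1⟩ rfl, ih ⟨(i : ℕ) + 1, hi1⟩ j (by simp; omega), pow_succ']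
    · intro b _ hb
      rcases le_or_gt (b : ℕ) (i : ℕ) with hbi | hbi
      · rw [hup i b hbi, zero_mul]
      · have hb2 : (b : ℕ) ≠ (i : ℕ) + 1 := fun hc => hb (Fin.ext hc)
        rw [strictUpper_pow hup k b j (by omega), mul_zero]
    · intro hmem; exact absurd (Finset.mem_univ _) hmem

def Pm (m : ℕ) (M : Matrix (Fin (m + 1)) (Fin (m + 1)) ℂ) :
    Matrix (Fin (m + 1)) (Fin (m + 1)) ℂ :=
  Matrix.of fun i j => (M ^ (m - (j : ℕ))) i (Fin.last m)

lemma Pm_mul_shift {m : ℕ} {M : Matrix (Fin (m + 1)) (Fin (m + 1)) ℂ}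
    (hnil : M ^ (m + 1) = 0) :
    M * Pm m M = Pm m M * jordanBlock (m + 1) 0 := by
  ext i j
  have hl : (M * Pm m M) i j = (M ^ (m - (j : ℕ) + 1)) i (Fin.last m) := by
    rw [pow_succ', Matrix.mul_apply, Matrix.mul_apply]
    rfl
  rcases j with ⟨jv, hj⟩
  cases jv with
  | zero =>
    rw [mul_shift_col_zero _ _ (by omega), hl]
    simp only [Nat.sub_zero]
    rw [hnil]
    rfl
  | succ k =>
    rw [mul_shift_col _ _ k hj, hl]
    show (M ^ (m - (k + 1) + 1)) i (Fin.last m) = (M ^ (m - k)) i (Fin.last m)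
    rw [show m - (k + 1) + 1 = m - k from by omega]

lemma Pm_upper {m : ℕ} {M : Matrix (Fin (m + 1)) (Fin (m + 1)) ℂ}
    (hup : ∀ i j : Fin (m + 1), (j : ℕ) ≤ (i : ℕ) → M i j = 0)
    {i j : Fin (m + 1)} (hij : (j : ℕ) < (i : ℕ)) : Pm m M i j = 0 := by
  have hj := j.isLt
  exact strictUpper_pow hup (m - (j : ℕ)) i (Fin.last m) (by rw [Fin.val_last]; omega)

lemma Pm_diag {m : ℕ} {M : Matrix (Fin (m + 1)) (Fin (m + 1)) ℂ} {c : ℂ}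
    (hup : ∀ i j : Fin (m + 1), (j : ℕ) ≤ (i : ℕ) → M i j = 0)
    (hsd : ∀ i j : Fin (m + 1), (i : ℕ) + 1 = (j : ℕ) → M i j = c)
    (i : Fin (m + 1)) : Pm m M i i = c ^ (m - (i : ℕ)) := by
  have hi := i.isLt
  exact strictUpper_pow_diag hup hsd (m - (i : ℕ)) i (Fin.last m) (by rw [Fin.val_last]; omega)

lemma Pm_isUnit {m : ℕ} {M : Matrix (Fin (m + 1)) (Fin (m + 1)) ℂ} {c : ℂ}
    (hup : ∀ i j : Fin (m + 1), (j : ℕ) ≤ (i : ℕ) → M i j = 0)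
    (hsd : ∀ i j : Fin (m + 1), (i : ℕ) + 1 = (j : ℕ) → M i j = c)
    (hc : c ≠ 0) : IsUnit (Pm m M) := by
  rw [Matrix.isUnit_iff_isUnit_det]
  have hbt : (Pm m M).BlockTriangular id := by
    intro i j hlt
    exact Pm_upper hup hlt
  rw [Matrix.det_of_upperTriangular hbt]
  rw [isUnit_iff_ne_zero]
  apply Finset.prod_ne_zero_iff.mpr
  intro i _
  rw [Pm_diag hup hsd]
  exact pow_ne_zero _ hc

end ToeplitzAux

namespace ToeplitzAux

lemma jb_apply {n : ℕ} (lam : ℂ) (i j : Fin n) :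
    jordanBlock n lam i j = if (i : ℕ) = (j : ℕ) then lam
      else if (i : ℕ) + 1 = (j : ℕ) then 1 else 0 := rfl

end ToeplitzAux

open ToeplitzAux in
theorem toeplitz_dsum_canonical_form (n : ℕ) (lam : ℝ) (t : ℕ → ℂ)
    (T : Matrix (Fin n) (Fin n) ℂ)
    (hT : ∀ i j : Fin n, T i j = if (i : ℕ) ≤ (j : ℕ) then t ((j : ℕ) - (i : ℕ)) else 0)
    (ht0 : t 0 = (lam : ℂ)) (ht1 : t 1 ≠ 0) :
    ∃ S : Matrix (Fin (n + n)) (Fin (n + n)) ℂ, IsUnit S ∧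
      S⁻¹ * dsum T (T.map (starRingEnd ℂ)) * S =
        dsum (jordanBlock n (lam : ℂ)) (jordanBlock n (lam : ℂ)) ∧
      Sᴴ * backQ (n + n) * S = dsum (backQ n) (-(backQ n)) := by
  rcases n with _ | m
  · refine ⟨1, isUnit_one, ?_, ?_⟩ <;> · ext i j; exact i.elim0
  · have hn : 0 < m + 1 := Nat.succ_pos m
    set M : Matrix (Fin (m + 1)) (Fin (m + 1)) ℂ := T - (lam : ℂ) • 1 with hMdef
    -- strict upper triangularity of M
    have hup : ∀ i j : Fin (m + 1), (j : ℕ) ≤ (i : ℕ) → M i j = 0 := by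
      intro i j hij
      rw [hMdef, Matrix.sub_apply, Matrix.smul_apply, hT]
      rcases eq_or_ne (i : ℕ) (j : ℕ) with h | h
      · rw [if_pos (by omega), show (j : ℕ) - (i : ℕ) = 0 from by omega, ht0,
          show i = j from Fin.ext h, Matrix.one_apply_eq, smul_eq_mul, mul_one, sub_self]
      · rw [if_neg (by omega), Matrix.one_apply_ne (fun hc => h (by rw [hc])),
          smul_eq_mul, mul_zero, sub_zero]
    have hsd : ∀ i j : Fin (m + 1), (i : ℕ) + 1 = (j : ℕ) → M i j = t 1 := by
      intro i j hij
      rw [hMdef, Matrix.sub_apply, Matrix.smul_apply, hT, if_pos (by omega),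
        show (j : ℕ) - (i : ℕ) = 1 from by omega,
        Matrix.one_apply_ne (fun hc => by rw [hc] at hij; omega),
        smul_eq_mul, mul_zero, sub_zero]
    have hnil : M ^ (m + 1) = 0 := by
      ext i j
      rw [ToeplitzAux.strictUpper_pow hup (m + 1) i j (by have := j.isLt; omega),
        Matrix.zero_apply]
    set P : Matrix (Fin (m + 1)) (Fin (m + 1)) ℂ := ToeplitzAux.Pm m M with hPdef
    have hMP : M * P = P * jordanBlock (m + 1) 0 := ToeplitzAux.Pm_mul_shift hnil
    have hPunit : IsUnit P := ToeplitzAux.Pm_isUnit hup hsd ht1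
    have hPdet : IsUnit P.det := (Matrix.isUnit_iff_isUnit_det P).mp hPunit
    have hJsplit : jordanBlock (m + 1) (lam : ℂ) =
        (lam : ℂ) • 1 + jordanBlock (m + 1) 0 := by
      ext i j
      rw [ToeplitzAux.jb_apply, Matrix.add_apply, Matrix.smul_apply, ToeplitzAux.jb0_apply]
      rcases eq_or_ne (i : ℕ) (j : ℕ) with h | h
      · rw [if_pos h, show i = j from Fin.ext h, Matrix.one_apply_eq, if_neg (by omega),
          smul_eq_mul, mul_one, add_zero]
      · rw [if_neg h, Matrix.one_apply_ne (fun hc => h (by rw [hc])), smul_eq_mul,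
          mul_zero, zero_add]
    have hTsplit : T = (lam : ℂ) • 1 + M := by rw [hMdef]; abel
    have hTP : T * P = P * jordanBlock (m + 1) (lam : ℂ) := by
      rw [hTsplit, hJsplit, add_mul, mul_add, smul_mul_assoc, one_mul, mul_smul_comm,
        mul_one, hMP]
    have hQQ : backQ (m + 1) * backQ (m + 1) = 1 := ToeplitzAux.backQ_mul_backQ
    have hQdet : IsUnit (backQ (m + 1)).det := by
      have h2 := congrArg Matrix.det hQQ
      rw [Matrix.det_mul, Matrix.det_one] at h2
      exact IsUnit.of_mul_eq_one _ h2
    have hQTQ : backQ (m + 1) * T * backQ (m + 1) = Tᵀ := by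
      ext i j
      rw [ToeplitzAux.mul_backQ_apply, ToeplitzAux.backQ_mul_apply, Matrix.transpose_apply,
        hT, hT]
      have hi := i.isLt
      have hj := j.isLt
      simp only [Fin.val_rev]
      rcases le_or_gt (j : ℕ) (i : ℕ) with hle | hlt
      · rw [if_pos (by omega), if_pos hle]
        congr 1
        omega
      · rw [if_neg (by omega), if_neg (by omega)]
    have hQMQ : backQ (m + 1) * M * backQ (m + 1) = Mᵀ := by
      rw [hMdef]
      calc backQ (m + 1) * (T - (lam : ℂ) • 1) * backQ (m + 1)
          = backQ (m + 1) * T * backQ (m + 1) -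
            (lam : ℂ) • (backQ (m + 1) * backQ (m + 1)) := by
            rw [Matrix.mul_sub, Matrix.sub_mul, mul_smul_comm, Matrix.mul_one,
              smul_mul_assoc]
        _ = Tᵀ - (lam : ℂ) • 1 := by rw [hQTQ, hQQ]
        _ = (T - (lam : ℂ) • 1)ᵀ := by
            rw [Matrix.transpose_sub, Matrix.transpose_smul, Matrix.transpose_one]
    have hQM' : backQ (m + 1) * M = Mᵀ * backQ (m + 1) := by
      calc backQ (m + 1) * M
          = backQ (m + 1) * M * (backQ (m + 1) * backQ (m + 1)) := by
            rw [hQQ, mul_one]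
        _ = (backQ (m + 1) * M * backQ (m + 1)) * backQ (m + 1) := by rw [← mul_assoc]
        _ = Mᵀ * backQ (m + 1) := by rw [hQMQ]
    have hQNQ : backQ (m + 1) * jordanBlock (m + 1) 0 * backQ (m + 1) =
        (jordanBlock (m + 1) 0)ᵀ := ToeplitzAux.centralizer_flip hn rfl
    have hQN' : backQ (m + 1) * (jordanBlock (m + 1) 0)ᵀ =
        jordanBlock (m + 1) 0 * backQ (m + 1) := by
      calc backQ (m + 1) * (jordanBlock (m + 1) 0)ᵀ
          = backQ (m + 1) * (backQ (m + 1) * jordanBlock (m + 1) 0 * backQ (m + 1)) := by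
            rw [hQNQ]
        _ = ((backQ (m + 1) * backQ (m + 1)) * jordanBlock (m + 1) 0) * backQ (m + 1) := by
            rw [← mul_assoc, ← mul_assoc]
        _ = jordanBlock (m + 1) 0 * backQ (m + 1) := by rw [hQQ, one_mul]
    set K : Matrix (Fin (m + 1)) (Fin (m + 1)) ℂ := Pᵀ * backQ (m + 1) * P with hKdef
    have hKN : K * jordanBlock (m + 1) 0 = (jordanBlock (m + 1) 0)ᵀ * K := by
      rw [hKdef]
      calc Pᵀ * backQ (m + 1) * P * jordanBlock (m + 1) 0
          = Pᵀ * backQ (m + 1) * (P * jordanBlock (m + 1) 0) := by rw [mul_assoc]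
        _ = Pᵀ * backQ (m + 1) * (M * P) := by rw [← hMP]
        _ = Pᵀ * (backQ (m + 1) * M) * P := by
            rw [mul_assoc Pᵀ (backQ (m + 1)) (M * P), ← mul_assoc (backQ (m + 1)) M P,
              ← mul_assoc]
        _ = Pᵀ * (Mᵀ * backQ (m + 1)) * P := by rw [hQM']
        _ = (Pᵀ * Mᵀ) * (backQ (m + 1) * P) := by
            rw [← mul_assoc, mul_assoc (Pᵀ * Mᵀ) (backQ (m + 1)) P]
        _ = (M * P)ᵀ * (backQ (m + 1) * P) := by rw [Matrix.transpose_mul]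
        _ = (P * jordanBlock (m + 1) 0)ᵀ * (backQ (m + 1) * P) := by rw [hMP]
        _ = (jordanBlock (m + 1) 0)ᵀ * (Pᵀ * backQ (m + 1) * P) := by
            rw [Matrix.transpose_mul, mul_assoc, mul_assoc]
    set p : Matrix (Fin (m + 1)) (Fin (m + 1)) ℂ := backQ (m + 1) * K with hpdef
    have hKQp : K = backQ (m + 1) * p := by
      rw [hpdef, ← mul_assoc, hQQ, one_mul]
    have hpN : p * jordanBlock (m + 1) 0 = jordanBlock (m + 1) 0 * p := by
      rw [hpdef]
      calc (backQ (m + 1) * K) * jordanBlock (m + 1) 0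
          = backQ (m + 1) * (K * jordanBlock (m + 1) 0) := mul_assoc _ _ _
        _ = backQ (m + 1) * ((jordanBlock (m + 1) 0)ᵀ * K) := by rw [hKN]
        _ = (backQ (m + 1) * (jordanBlock (m + 1) 0)ᵀ) * K := (mul_assoc _ _ _).symm
        _ = (jordanBlock (m + 1) 0 * backQ (m + 1)) * K := by rw [hQN']
        _ = jordanBlock (m + 1) 0 * (backQ (m + 1) * K) := mul_assoc _ _ _
    have hKdet : IsUnit K.det := by
      rw [hKdef, Matrix.det_mul, Matrix.det_mul, Matrix.det_transpose]
      exact (hPdet.mul hQdet).mul hPdet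
    have hpdet : IsUnit p.det := by
      rw [hpdef, Matrix.det_mul]
      exact hQdet.mul hKdet
    -- conjugation facts
    have hNreal : (jordanBlock (m + 1) 0).map (starRingEnd ℂ) = jordanBlock (m + 1) 0 := by
      ext i j
      rw [Matrix.map_apply, ToeplitzAux.jb0_apply, apply_ite (starRingEnd ℂ),
        _root_.map_one, _root_.map_zero]
    have hQreal : (backQ (m + 1)).map (starRingEnd ℂ) = backQ (m + 1) := by
      ext i j
      rw [Matrix.map_apply, ToeplitzAux.backQ_apply, apply_ite (starRingEnd ℂ),
        _root_.map_one, _root_.map_zero]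
    have hJreal : (jordanBlock (m + 1) (lam : ℂ)).map (starRingEnd ℂ) =
        jordanBlock (m + 1) (lam : ℂ) := by
      ext i j
      rw [Matrix.map_apply, ToeplitzAux.jb_apply, apply_ite (starRingEnd ℂ),
        apply_ite (starRingEnd ℂ), _root_.map_one, _root_.map_zero, Complex.conj_ofReal]
    set u : Matrix (Fin (m + 1)) (Fin (m + 1)) ℂ := p.map (starRingEnd ℂ) with hudef
    have humap : u.map (starRingEnd ℂ) = p := by
      rw [hudef]
      ext i j
      simp [Matrix.map_apply]
    have hudet : IsUnit u.det := by
      have h3 : (starRingEnd ℂ) p.det = u.det := by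
        rw [RingHom.map_det, RingHom.mapMatrix_apply, hudef]
      exact h3 ▸ hpdet.map (starRingEnd ℂ)
    have huu : u * u⁻¹ = 1 := Matrix.mul_nonsing_inv _ hudet
    have huu' : u⁻¹ * u = 1 := Matrix.nonsing_inv_mul _ hudet
    have huN : u * jordanBlock (m + 1) 0 = jordanBlock (m + 1) 0 * u := by
      have h2 := congrArg (fun X : Matrix (Fin (m + 1)) (Fin (m + 1)) ℂ =>
        X.map (starRingEnd ℂ)) hpN
      simp only [Matrix.map_mul, hNreal] at h2
      rw [hudef]
      exact h2
    have hNuinv : u⁻¹ * jordanBlock (m + 1) 0 = jordanBlock (m + 1) 0 * u⁻¹ := by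
      calc u⁻¹ * jordanBlock (m + 1) 0
          = u⁻¹ * jordanBlock (m + 1) 0 * (u * u⁻¹) := by rw [huu, mul_one]
        _ = ((u⁻¹ * jordanBlock (m + 1) 0) * u) * u⁻¹ := by rw [← mul_assoc]
        _ = (u⁻¹ * (jordanBlock (m + 1) 0 * u)) * u⁻¹ := by
            rw [mul_assoc u⁻¹ (jordanBlock (m + 1) 0) u]
        _ = (u⁻¹ * (u * jordanBlock (m + 1) 0)) * u⁻¹ := by rw [← huN]
        _ = ((u⁻¹ * u) * jordanBlock (m + 1) 0) * u⁻¹ := by rw [← mul_assoc]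
        _ = jordanBlock (m + 1) 0 * u⁻¹ := by rw [huu', one_mul]
    set c : Matrix (Fin (m + 1)) (Fin (m + 1)) ℂ := (2⁻¹ : ℂ) • u⁻¹ with hcdef
    have hcN : c * jordanBlock (m + 1) 0 = jordanBlock (m + 1) 0 * c := by
      rw [hcdef, smul_mul_assoc, mul_smul_comm, hNuinv]
    have hcJ : c * jordanBlock (m + 1) (lam : ℂ) = jordanBlock (m + 1) (lam : ℂ) * c := by
      have hsc : c * ((lam : ℂ) • 1) = ((lam : ℂ) • 1) * c := by
        rw [smul_mul_assoc (lam : ℂ) (1 : Matrix (Fin (m + 1)) (Fin (m + 1)) ℂ) c, one_mul,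
          mul_smul_comm (lam : ℂ) c (1 : Matrix (Fin (m + 1)) (Fin (m + 1)) ℂ), mul_one]
      rw [hJsplit, mul_add, add_mul, hsc, hcN]
    have hconjhalf : (starRingEnd ℂ) (2⁻¹ : ℂ) = 2⁻¹ := by
      rw [map_inv₀, map_ofNat]
    have huinvmap : (u⁻¹).map (starRingEnd ℂ) = p⁻¹ := by
      have h1 : p * ((u⁻¹).map (starRingEnd ℂ)) = 1 := by
        rw [← humap, ← Matrix.map_mul, huu]
        exact Matrix.map_one _ (_root_.map_zero _) (_root_.map_one _)
      exact (Matrix.inv_eq_right_inv h1).symm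
    have hconjc : c.map (starRingEnd ℂ) = (2⁻¹ : ℂ) • p⁻¹ := by
      rw [hcdef]
      ext i j
      rw [Matrix.map_apply, Matrix.smul_apply, Matrix.smul_apply, smul_eq_mul,
        smul_eq_mul, _root_.map_mul, hconjhalf, ← huinvmap, Matrix.map_apply]
    have hpinvp : p⁻¹ * p = 1 := Matrix.nonsing_inv_mul _ hpdet
    have hkey1 : (c.map (starRingEnd ℂ)) * p = (2⁻¹ : ℂ) • 1 := by
      rw [hconjc, smul_mul_assoc, hpinvp]
    have hkey2 : c * u = (2⁻¹ : ℂ) • 1 := by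
      rw [hcdef, smul_mul_assoc, huu']
    have hkey2' : u * c = (2⁻¹ : ℂ) • 1 := by
      rw [hcdef, mul_smul_comm, huu]
    have hcσN : (c.map (starRingEnd ℂ)) * jordanBlock (m + 1) 0 =
        jordanBlock (m + 1) 0 * (c.map (starRingEnd ℂ)) := by
      have h2 := congrArg (fun X : Matrix (Fin (m + 1)) (Fin (m + 1)) ℂ =>
        X.map (starRingEnd ℂ)) hcN
      simp only [Matrix.map_mul, hNreal] at h2
      exact h2
    have hcH : cᴴ = backQ (m + 1) * (c.map (starRingEnd ℂ)) * backQ (m + 1) := by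
      rw [ToeplitzAux.centralizer_flip hn hcσN]
      ext i j
      rw [Matrix.conjTranspose_apply, Matrix.transpose_apply, Matrix.map_apply,
        starRingEnd_apply]
    have hKmap : K.map (starRingEnd ℂ) = backQ (m + 1) * u := by
      rw [hKQp, Matrix.map_mul, hQreal, ← hudef]
    have hKσc : (K.map (starRingEnd ℂ)) * c = (2⁻¹ : ℂ) • backQ (m + 1) := by
      rw [hKmap, mul_assoc, hkey2', mul_smul_comm, mul_one]
    have hcHK : cᴴ * K = (2⁻¹ : ℂ) • backQ (m + 1) := by
      rw [hcH, hKQp]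
      calc (backQ (m + 1) * (c.map (starRingEnd ℂ)) * backQ (m + 1)) * (backQ (m + 1) * p)
          = backQ (m + 1) * (c.map (starRingEnd ℂ)) * (backQ (m + 1) * (backQ (m + 1) * p)) := by
            rw [mul_assoc]
        _ = backQ (m + 1) * (c.map (starRingEnd ℂ)) * p := by
            rw [← mul_assoc (backQ (m + 1)) (backQ (m + 1)) p, hQQ, one_mul]
        _ = backQ (m + 1) * ((c.map (starRingEnd ℂ)) * p) := by rw [mul_assoc]
        _ = backQ (m + 1) * ((2⁻¹ : ℂ) • 1) := by rw [hkey1]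
        _ = (2⁻¹ : ℂ) • backQ (m + 1) := by rw [mul_smul_comm, mul_one]
    have hPH : Pᴴ = Pᵀ.map (starRingEnd ℂ) := by
      ext i j
      rw [Matrix.conjTranspose_apply, Matrix.map_apply, Matrix.transpose_apply,
        starRingEnd_apply]
    have hPbarH : (P.map (starRingEnd ℂ))ᴴ = Pᵀ := by
      ext i j
      rw [Matrix.conjTranspose_apply, Matrix.map_apply, Matrix.transpose_apply,
        starRingEnd_apply, star_star]
    have hKσ2 : Pᴴ * backQ (m + 1) * (P.map (starRingEnd ℂ)) = K.map (starRingEnd ℂ) := by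
      rw [hPH, hKdef, Matrix.map_mul, Matrix.map_mul, hQreal]
    have hTPbar : (T.map (starRingEnd ℂ)) * (P.map (starRingEnd ℂ)) =
        (P.map (starRingEnd ℂ)) * jordanBlock (m + 1) (lam : ℂ) := by
      have h2 := congrArg (fun X : Matrix (Fin (m + 1)) (Fin (m + 1)) ℂ =>
        X.map (starRingEnd ℂ)) hTP
      simp only [Matrix.map_mul, hJreal] at h2
      exact h2
    -- block matrices
    set D2 : Matrix (Fin (m + 1) ⊕ Fin (m + 1)) (Fin (m + 1) ⊕ Fin (m + 1)) ℂ :=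
      Matrix.fromBlocks P 0 0 (P.map (starRingEnd ℂ)) with hD2def
    set Cb : Matrix (Fin (m + 1) ⊕ Fin (m + 1)) (Fin (m + 1) ⊕ Fin (m + 1)) ℂ :=
      Matrix.fromBlocks 1 (-1) c c with hCbdef
    set S0 : Matrix (Fin (m + 1) ⊕ Fin (m + 1)) (Fin (m + 1) ⊕ Fin (m + 1)) ℂ :=
      D2 * Cb with hS0def
    have hrmul : ∀ A B : Matrix (Fin (m + 1) ⊕ Fin (m + 1)) (Fin (m + 1) ⊕ Fin (m + 1)) ℂ,
        (Matrix.reindex finSumFinEquiv finSumFinEquiv A) *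
          (Matrix.reindex finSumFinEquiv finSumFinEquiv B) =
          Matrix.reindex finSumFinEquiv finSumFinEquiv (A * B) := by
      intro A B
      rw [Matrix.reindex_apply, Matrix.reindex_apply, Matrix.reindex_apply,
        Matrix.submatrix_mul_equiv]
    have hrH : ∀ A : Matrix (Fin (m + 1) ⊕ Fin (m + 1)) (Fin (m + 1) ⊕ Fin (m + 1)) ℂ,
        (Matrix.reindex finSumFinEquiv finSumFinEquiv A)ᴴ =
          Matrix.reindex finSumFinEquiv finSumFinEquiv Aᴴ := by
      intro A
      rw [Matrix.reindex_apply, Matrix.reindex_apply, Matrix.conjTranspose_submatrix]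
    have hQsplit : backQ ((m + 1) + (m + 1)) = Matrix.reindex finSumFinEquiv finSumFinEquiv
        (Matrix.fromBlocks 0 (backQ (m + 1)) (backQ (m + 1)) 0) := by
      ext i j
      obtain ⟨i', rfl⟩ := finSumFinEquiv.surjective i
      obtain ⟨j', rfl⟩ := finSumFinEquiv.surjective j
      rw [Matrix.reindex_apply, Matrix.submatrix_apply, Equiv.symm_apply_apply,
        Equiv.symm_apply_apply]
      rcases i' with a | a <;> rcases j' with b | b <;>
        simp only [finSumFinEquiv_apply_left, finSumFinEquiv_apply_right,
          Matrix.fromBlocks_apply₁₁, Matrix.fromBlocks_apply₁₂, Matrix.fromBlocks_apply₂₁,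
          Matrix.fromBlocks_apply₂₂, ToeplitzAux.backQ_apply, Fin.coe_castAdd,
          Fin.coe_natAdd, Matrix.zero_apply]
      · rw [if_neg]
        have := a.isLt; have := b.isLt; omega
      · have ha := a.isLt; have hb := b.isLt
        by_cases hcond : (a : ℕ) + (b : ℕ) + 1 = m + 1
        · rw [if_pos (by omega), if_pos hcond]
        · rw [if_neg (by omega), if_neg hcond]
      · have ha := a.isLt; have hb := b.isLt
        by_cases hcond : (a : ℕ) + (b : ℕ) + 1 = m + 1
        · rw [if_pos (by omega), if_pos hcond]
        · rw [if_neg (by omega), if_neg hcond]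
      · rw [if_neg]
        have := a.isLt; have := b.isLt; omega
    have hPbardet : IsUnit (P.map (starRingEnd ℂ)).det := by
      have h3 : (starRingEnd ℂ) P.det = (P.map (starRingEnd ℂ)).det := by
        rw [RingHom.map_det, RingHom.mapMatrix_apply]
      exact h3 ▸ hPdet.map (starRingEnd ℂ)
    have hD2det : IsUnit D2.det := by
      rw [hD2def, Matrix.det_fromBlocks_zero₂₁]
      exact hPdet.mul hPbardet
    have hCbdet : IsUnit Cb.det := by
      have hCbinv : Cb * Matrix.fromBlocks ((2⁻¹ : ℂ) • (1 : Matrix (Fin (m + 1)) (Fin (m + 1)) ℂ)) u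
          (-((2⁻¹ : ℂ) • (1 : Matrix (Fin (m + 1)) (Fin (m + 1)) ℂ))) u =
          (1 : Matrix (Fin (m + 1) ⊕ Fin (m + 1)) (Fin (m + 1) ⊕ Fin (m + 1)) ℂ) := by
        rw [hCbdef, Matrix.fromBlocks_multiply, ← Matrix.fromBlocks_one]
        refine Matrix.fromBlocks_inj.mpr ⟨?_, ?_, ?_, ?_⟩
        · rw [one_mul, neg_mul_neg, one_mul, ← add_smul]
          norm_num
        · rw [one_mul, neg_one_mul, add_neg_cancel]
        · rw [mul_neg, add_neg_cancel]
        · rw [hkey2, ← add_smul]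
          norm_num
      have h2 := congrArg Matrix.det hCbinv
      rw [Matrix.det_mul, Matrix.det_one] at h2
      exact IsUnit.of_mul_eq_one _ h2
    have hS0det : IsUnit S0.det := by
      rw [hS0def, Matrix.det_mul]
      exact hD2det.mul hCbdet
    have hSdet : IsUnit (Matrix.reindex finSumFinEquiv finSumFinEquiv S0).det := by
      rw [Matrix.det_reindex_self]
      exact hS0det
    refine ⟨Matrix.reindex finSumFinEquiv finSumFinEquiv S0,
      (Matrix.isUnit_iff_isUnit_det _).mpr hSdet, ?_, ?_⟩
    · -- similarity to the Jordan form
      have h1 : Matrix.fromBlocks T 0 0 (T.map (starRingEnd ℂ)) * D2 =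
          D2 * Matrix.fromBlocks (jordanBlock (m + 1) (lam : ℂ)) 0 0
            (jordanBlock (m + 1) (lam : ℂ)) := by
        rw [hD2def, Matrix.fromBlocks_multiply, Matrix.fromBlocks_multiply]
        simp only [Matrix.mul_zero, Matrix.zero_mul, add_zero, zero_add]
        rw [hTP, hTPbar]
      have h2 : Matrix.fromBlocks (jordanBlock (m + 1) (lam : ℂ)) 0 0
            (jordanBlock (m + 1) (lam : ℂ)) * Cb =
          Cb * Matrix.fromBlocks (jordanBlock (m + 1) (lam : ℂ)) 0 0
            (jordanBlock (m + 1) (lam : ℂ)) := by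
        rw [hCbdef, Matrix.fromBlocks_multiply, Matrix.fromBlocks_multiply]
        simp only [Matrix.mul_zero, Matrix.zero_mul, add_zero, zero_add, Matrix.mul_one,
          Matrix.one_mul, mul_neg_one, neg_one_mul, neg_zero]
        rw [hcJ]
      have hBS : Matrix.fromBlocks T 0 0 (T.map (starRingEnd ℂ)) * S0 =
          S0 * Matrix.fromBlocks (jordanBlock (m + 1) (lam : ℂ)) 0 0
            (jordanBlock (m + 1) (lam : ℂ)) := by
        rw [hS0def]
        calc Matrix.fromBlocks T 0 0 (T.map (starRingEnd ℂ)) * (D2 * Cb)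
            = (Matrix.fromBlocks T 0 0 (T.map (starRingEnd ℂ)) * D2) * Cb :=
              (mul_assoc _ _ _).symm
          _ = (D2 * Matrix.fromBlocks (jordanBlock (m + 1) (lam : ℂ)) 0 0
                (jordanBlock (m + 1) (lam : ℂ))) * Cb := by rw [h1]
          _ = D2 * (Matrix.fromBlocks (jordanBlock (m + 1) (lam : ℂ)) 0 0
                (jordanBlock (m + 1) (lam : ℂ)) * Cb) := mul_assoc _ _ _
          _ = D2 * (Cb * Matrix.fromBlocks (jordanBlock (m + 1) (lam : ℂ)) 0 0
                (jordanBlock (m + 1) (lam : ℂ))) := by rw [h2]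
          _ = (D2 * Cb) * Matrix.fromBlocks (jordanBlock (m + 1) (lam : ℂ)) 0 0
                (jordanBlock (m + 1) (lam : ℂ)) := (mul_assoc _ _ _).symm
      have hdS : dsum T (T.map (starRingEnd ℂ)) *
          Matrix.reindex finSumFinEquiv finSumFinEquiv S0 =
          Matrix.reindex finSumFinEquiv finSumFinEquiv S0 *
            dsum (jordanBlock (m + 1) (lam : ℂ)) (jordanBlock (m + 1) (lam : ℂ)) := by
        simp only [dsum]
        rw [hrmul, hrmul, hBS]
      rw [mul_assoc, hdS, ← mul_assoc, Matrix.nonsing_inv_mul _ hSdet, one_mul]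
    · -- the form identity
      have hDH : D2ᴴ = Matrix.fromBlocks Pᴴ 0 0 Pᵀ := by
        rw [hD2def, Matrix.fromBlocks_conjTranspose, Matrix.conjTranspose_zero, hPbarH]
      have hstep1 : (Matrix.fromBlocks Pᴴ 0 0 Pᵀ) *
          Matrix.fromBlocks 0 (backQ (m + 1)) (backQ (m + 1)) 0 =
          Matrix.fromBlocks 0 (Pᴴ * backQ (m + 1)) (Pᵀ * backQ (m + 1)) 0 := by
        rw [Matrix.fromBlocks_multiply]
        simp only [Matrix.mul_zero, Matrix.zero_mul, add_zero, zero_add]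
      have hstep2 : (Matrix.fromBlocks 0 (Pᴴ * backQ (m + 1)) (Pᵀ * backQ (m + 1)) 0) * D2 =
          Matrix.fromBlocks 0 (K.map (starRingEnd ℂ)) K 0 := by
        rw [hD2def, Matrix.fromBlocks_multiply]
        simp only [Matrix.mul_zero, Matrix.zero_mul, add_zero, zero_add]
        rw [hKσ2, ← hKdef]
      have hmid : D2ᴴ * Matrix.fromBlocks 0 (backQ (m + 1)) (backQ (m + 1)) 0 * D2 =
          Matrix.fromBlocks 0 (K.map (starRingEnd ℂ)) K 0 := by
        rw [hDH, hstep1, hstep2]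
      have hCbH : Cbᴴ = Matrix.fromBlocks 1 cᴴ (-1) cᴴ := by
        rw [hCbdef, Matrix.fromBlocks_conjTranspose, Matrix.conjTranspose_one,
          Matrix.conjTranspose_neg, Matrix.conjTranspose_one]
      have hX1 : (Matrix.fromBlocks 1 cᴴ (-1) cᴴ) *
          Matrix.fromBlocks 0 (K.map (starRingEnd ℂ)) K 0 =
          Matrix.fromBlocks (cᴴ * K) (K.map (starRingEnd ℂ)) (cᴴ * K)
            (-(K.map (starRingEnd ℂ))) := by
        rw [Matrix.fromBlocks_multiply]
        simp only [Matrix.one_mul, Matrix.mul_zero, Matrix.zero_mul, add_zero, zero_add,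
          neg_one_mul, one_mul, neg_zero]
      have hX2 : (Matrix.fromBlocks (cᴴ * K) (K.map (starRingEnd ℂ)) (cᴴ * K)
            (-(K.map (starRingEnd ℂ)))) * Cb =
          Matrix.fromBlocks (backQ (m + 1)) 0 0 (-(backQ (m + 1))) := by
        rw [hCbdef, Matrix.fromBlocks_multiply]
        simp only [Matrix.mul_one, mul_neg_one, neg_mul]
        rw [hcHK, hKσc]
        refine Matrix.fromBlocks_inj.mpr ⟨?_, ?_, ?_, ?_⟩
        · rw [← add_smul, show (2⁻¹ + 2⁻¹ : ℂ) = 1 from by norm_num, one_smul]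
        · rw [neg_add_cancel]
        · rw [add_neg_cancel]
        · rw [← neg_add, ← add_smul, show (2⁻¹ + 2⁻¹ : ℂ) = 1 from by norm_num, one_smul]
      have hblocks : S0ᴴ * Matrix.fromBlocks 0 (backQ (m + 1)) (backQ (m + 1)) 0 * S0 =
          Matrix.fromBlocks (backQ (m + 1)) 0 0 (-(backQ (m + 1))) := by
        calc S0ᴴ * Matrix.fromBlocks 0 (backQ (m + 1)) (backQ (m + 1)) 0 * S0
            = (Cbᴴ * D2ᴴ) * Matrix.fromBlocks 0 (backQ (m + 1)) (backQ (m + 1)) 0 *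
              (D2 * Cb) := by rw [hS0def, Matrix.conjTranspose_mul]
          _ = (Cbᴴ * (D2ᴴ * Matrix.fromBlocks 0 (backQ (m + 1)) (backQ (m + 1)) 0)) *
              (D2 * Cb) := by rw [mul_assoc Cbᴴ D2ᴴ]
          _ = ((Cbᴴ * (D2ᴴ * Matrix.fromBlocks 0 (backQ (m + 1)) (backQ (m + 1)) 0)) * D2) *
              Cb := by rw [← mul_assoc]
          _ = (Cbᴴ * (D2ᴴ * Matrix.fromBlocks 0 (backQ (m + 1)) (backQ (m + 1)) 0 * D2)) *
              Cb := by rw [mul_assoc Cbᴴ (D2ᴴ * Matrix.fromBlocks 0 (backQ (m + 1)) (backQ (m + 1)) 0) D2]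
          _ = (Cbᴴ * Matrix.fromBlocks 0 (K.map (starRingEnd ℂ)) K 0) * Cb := by rw [hmid]
          _ = Matrix.fromBlocks (backQ (m + 1)) 0 0 (-(backQ (m + 1))) := by
              rw [hCbH, hX1, hX2]
      rw [hrH, hQsplit, hrmul, hrmul, hblocks]
      rfl
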